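/- The LLL potential D = ∏_{i=1}^{n-1} ‖b̂ᵢ‖^{2(n-i)} decreases by a factor strictly less than δ under an LLL swap of b_{k-1} and b_k when the Lovász condition fails, i.e., D_new < δ · D_old. -/

import Mathlib

/-- Gram-Schmidt orthogonalization of a family of vectors in ℂⁿ. -/
noncomputable def gso {n : ℕ} (b : Fin n → EuclideanSpace ℂ (Fin n)) :
    Fin n → EuclideanSpace ℂ (Fin n) :=
  @InnerProductSpace.gramSchmidt ℂ _ _ _ _ (Fin n) _ _ (inferInstance : WellFoundedLT (Fin n)) b

/-- Gram-Schmidt coefficient μ_{i,j} = ⟨bᵢ, b̂ⱼ⟩ / ‖b̂ⱼ‖². -/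
noncomputable def mu {n : ℕ} (b : Fin n → EuclideanSpace ℂ (Fin n)) (i j : Fin n) : ℂ :=
  (inner ℂ (gso b j) (b i) : ℂ) / ((‖gso b j‖ ^ 2 : ℝ) : ℂ)

/-- The LLL potential D = ∏_{i} ‖b̂ᵢ‖^{2(n-1-i)} (0-indexed). -/
noncomputable def pot {n : ℕ} (b : Fin n → EuclideanSpace ℂ (Fin n)) : ℝ :=
  ∏ i : Fin n, ‖gso b i‖ ^ (2 * (n - 1 - i.val))


open Submodule Set Finset
set_option maxHeartbeats 1000000

section helpers
variable {n : ℕ}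

lemma gso_ne_zero {b : Fin n → EuclideanSpace ℂ (Fin n)} (hb : LinearIndependent ℂ b) (m : Fin n) :
    gso b m ≠ 0 := @InnerProductSpace.gramSchmidt_ne_zero ℂ _ _ _ _ (Fin n) _ _ (inferInstance : WellFoundedLT (Fin n)) b m hb

lemma gso_orthogonal (b : Fin n → EuclideanSpace ℂ (Fin n)) {m k : Fin n} (h : m ≠ k) :
    (inner ℂ (gso b m) (gso b k) : ℂ) = 0 :=
  @InnerProductSpace.gramSchmidt_orthogonal ℂ _ _ _ _ (Fin n) _ _ (inferInstance : WellFoundedLT (Fin n)) b m k h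

lemma gso_def'' (b : Fin n → EuclideanSpace ℂ (Fin n)) (m : Fin n) :
    b m = gso b m + ∑ k ∈ Finset.Iio m,
      ((inner ℂ (gso b k) (b m) : ℂ) / (‖gso b k‖ : ℂ) ^ 2) • gso b k :=
  @InnerProductSpace.gramSchmidt_def'' ℂ _ _ _ _ (Fin n) _ _ (inferInstance : WellFoundedLT (Fin n)) b m

lemma gso_span (b : Fin n → EuclideanSpace ℂ (Fin n)) (m : Fin n) :
    span ℂ (gso b '' Set.Iio m) = span ℂ (b '' Set.Iio m) :=
  @InnerProductSpace.span_gramSchmidt_Iio ℂ _ _ _ _ (Fin n) _ _ (inferInstance : WellFoundedLT (Fin n)) b m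

lemma gso_mem_span (b : Fin n → EuclideanSpace ℂ (Fin n)) {m k : Fin n} (h : k ≤ m) :
    gso b k ∈ span ℂ (b '' Set.Iic m) :=
  @InnerProductSpace.gramSchmidt_mem_span ℂ _ _ _ _ (Fin n) _ _ (inferInstance : WellFoundedLT (Fin n)) b m k h

lemma mem_orthogonal_span {E : Type*} [NormedAddCommGroup E] [InnerProductSpace ℂ E] {s : Set E}
    {v : E} (h : ∀ x ∈ s, (inner ℂ x v : ℂ) = 0) : v ∈ (span ℂ s)ᗮ := by
  rw [Submodule.mem_orthogonal]
  intro u hu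
  induction hu using Submodule.span_induction with
  | mem x hx => exact h x hx
  | zero => simp
  | add x y _ _ hx hy => simp [inner_add_left, hx, hy]
  | smul c x _ hx => simp [inner_smul_left, hx]

lemma gso_mem_orthogonal (b : Fin n → EuclideanSpace ℂ (Fin n)) (m : Fin n) :
    gso b m ∈ (span ℂ (b '' Set.Iio m))ᗮ := by
  rw [← gso_span]
  exact mem_orthogonal_span (by rintro x ⟨k, hk, rfl⟩; exact gso_orthogonal b (ne_of_lt hk))

lemma gso_sub_mem (b : Fin n → EuclideanSpace ℂ (Fin n)) (m : Fin n) :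
    b m - gso b m ∈ span ℂ (b '' Set.Iio m) := by
  rw [← gso_span]
  have h := gso_def'' b m
  rw [h]
  simp only [add_sub_cancel_left]
  exact Submodule.sum_mem _ fun k hk =>
    Submodule.smul_mem _ _ (subset_span ⟨k, Finset.mem_Iio.mp hk, rfl⟩)

lemma gso_unique (b : Fin n → EuclideanSpace ℂ (Fin n)) (m : Fin n) (v : EuclideanSpace ℂ (Fin n))
    (h1 : b m - v ∈ span ℂ (b '' Set.Iio m)) (h2 : v ∈ (span ℂ (b '' Set.Iio m))ᗮ) :
    gso b m = v := by
  have hd : gso b m - v ∈ span ℂ (b '' Set.Iio m) := by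
    have heq : gso b m - v = (b m - v) - (b m - gso b m) := by abel
    rw [heq]; exact Submodule.sub_mem _ h1 (gso_sub_mem b m)
  have hd2 : gso b m - v ∈ (span ℂ (b '' Set.Iio m))ᗮ :=
    Submodule.sub_mem _ (gso_mem_orthogonal b m) h2
  have h0 : (inner ℂ (gso b m - v) (gso b m - v) : ℂ) = 0 :=
    inner_right_of_mem_orthogonal hd hd2
  rwa [inner_self_eq_zero, sub_eq_zero] at h0

end helpers

section swap
variable {n : ℕ} {j i : Fin n} (hij : j.val + 1 = i.val)

lemma swap_ne {m : Fin n} (h1 : m ≠ j) (h2 : m ≠ i) : Equiv.swap j i m = m :=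
  Equiv.swap_apply_of_ne_of_ne h1 h2

include hij in
lemma swap_image_Iio_le {m : Fin n} (hm : m ≤ j) (b : Fin n → EuclideanSpace ℂ (Fin n)) :
    (b ∘ Equiv.swap j i) '' Set.Iio m = b '' Set.Iio m := by
  apply Set.image_congr
  intro x hx
  have hx' : x < m := hx
  have hxj : x ≠ j := by
    intro h; subst h; exact absurd (lt_of_lt_of_le hx' hm) (lt_irrefl _)
  have hxi : x ≠ i := by
    intro h; subst h
    have := lt_of_lt_of_le hx' hm
    rw [Fin.lt_def] at this; omega
  simp [Function.comp, swap_ne hxj hxi]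

include hij in
lemma swap_image_Iio_gt {m : Fin n} (hm : i < m) (b : Fin n → EuclideanSpace ℂ (Fin n)) :
    (b ∘ Equiv.swap j i) '' Set.Iio m = b '' Set.Iio m := by
  have hs : (Equiv.swap j i) '' Set.Iio m = Set.Iio m := by
    rw [Equiv.image_eq_preimage_symm]
    ext x
    simp only [Set.mem_preimage, Set.mem_Iio, Equiv.symm_swap]
    have hji : j < i := by rw [Fin.lt_def]; omega
    rcases eq_or_ne x j with rfl | hxj
    · simp [Equiv.swap_apply_left, hm, lt_trans hji hm]
    rcases eq_or_ne x i with rfl | hxi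
    · simp [Equiv.swap_apply_right, hm, lt_trans hji hm]
    · rw [swap_ne hxj hxi]
  rw [Set.image_comp, hs]

include hij in
lemma Iio_i_eq : Set.Iio i = insert j (Set.Iio j) := by
  ext x
  simp only [Set.mem_Iio, Set.mem_insert_iff, Fin.lt_def, Fin.ext_iff]
  omega

include hij in
lemma Finset_Iio_i_eq : Finset.Iio i = insert j (Finset.Iio j) := by
  ext x
  simp only [Finset.mem_Iio, Finset.mem_insert, Fin.lt_def, Fin.ext_iff]
  omega

include hij in
lemma swap_image_Iio_i (b : Fin n → EuclideanSpace ℂ (Fin n)) :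
    (b ∘ Equiv.swap j i) '' Set.Iio i = insert (b i) (b '' Set.Iio j) := by
  rw [Iio_i_eq hij, Set.image_insert_eq]
  congr 1
  · simp [Function.comp, Equiv.swap_apply_left]
  · exact swap_image_Iio_le hij le_rfl b

end swap

section gsoswap
variable {n : ℕ} {j i : Fin n} (hij : j.val + 1 = i.val)
  (b : Fin n → EuclideanSpace ℂ (Fin n))

include hij in
lemma gso_swap_other {m : Fin n} (hm : m < j ∨ i < m) :
    gso (b ∘ Equiv.swap j i) m = gso b m := by
  have hmj : m ≠ j := by rcases hm with h | h <;> (rw [Fin.lt_def] at h; intro he; subst he; omega)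
  have hmi : m ≠ i := by rcases hm with h | h <;> (rw [Fin.lt_def] at h; intro he; subst he; omega)
  have himg : (b ∘ Equiv.swap j i) '' Set.Iio m = b '' Set.Iio m := by
    rcases hm with h | h
    · exact swap_image_Iio_le hij h.le b
    · exact swap_image_Iio_gt hij h b
  apply gso_unique
  · have hbm : (b ∘ Equiv.swap j i) m = b m := by simp [Function.comp, swap_ne hmj hmi]
    rw [hbm, himg]
    exact gso_sub_mem b m
  · rw [himg]
    exact gso_mem_orthogonal b m

include hij in
lemma gso_swap_j :
    gso (b ∘ Equiv.swap j i) j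
      = gso b i + ((inner ℂ (gso b j) (b i) : ℂ) / ((‖gso b j‖ ^ 2 : ℝ) : ℂ)) • gso b j := by
  set μ : ℂ := (inner ℂ (gso b j) (b i) : ℂ) / ((‖gso b j‖ ^ 2 : ℝ) : ℂ) with hμdef
  have hji : j < i := by rw [Fin.lt_def]; omega
  have himg : (b ∘ Equiv.swap j i) '' Set.Iio j = b '' Set.Iio j :=
    swap_image_Iio_le hij le_rfl b
  apply gso_unique
  · have hbm : (b ∘ Equiv.swap j i) j = b i := by simp [Function.comp, Equiv.swap_apply_left]
    rw [hbm, himg, ← gso_span]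
    have hdef := gso_def'' b i
    rw [Finset_Iio_i_eq hij, Finset.sum_insert (by simp : j ∉ Finset.Iio j)] at hdef
    have hμ : μ = (inner ℂ (gso b j) (b i) : ℂ) / (‖gso b j‖ : ℂ) ^ 2 := by
      rw [hμdef]; push_cast; ring_nf
    have heq : b i - (gso b i + μ • gso b j)
        = ∑ k ∈ Finset.Iio j, ((inner ℂ (gso b k) (b i) : ℂ) / (‖gso b k‖ : ℂ) ^ 2) • gso b k := by
      rw [hμ]; nth_rewrite 1 [hdef]; abel
    rw [heq]
    exact Submodule.sum_mem _ fun k hk =>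
      Submodule.smul_mem _ _ (subset_span ⟨k, Finset.mem_Iio.mp hk, rfl⟩)
  · rw [himg, ← gso_span]
    apply mem_orthogonal_span
    rintro x ⟨k, hk, rfl⟩
    have hk' : (k : Fin n) < j := hk
    rw [inner_add_right, inner_smul_right,
      gso_orthogonal b (ne_of_lt (lt_trans hk' hji)), gso_orthogonal b (ne_of_lt hk')]
    ring

include hij in
lemma gso_swap_i (hb : LinearIndependent ℂ b) :
    gso (b ∘ Equiv.swap j i) i
      = gso b j - ((inner ℂ (gso (b ∘ Equiv.swap j i) j) (gso b j) : ℂ)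
          / ((‖gso (b ∘ Equiv.swap j i) j‖ ^ 2 : ℝ) : ℂ)) • gso (b ∘ Equiv.swap j i) j := by
  set b' := b ∘ Equiv.swap j i with hb'def
  set c := gso b' j with hcdef
  set t : ℂ := (inner ℂ c (gso b j) : ℂ) / ((‖c‖ ^ 2 : ℝ) : ℂ) with htdef
  have hji : j < i := by rw [Fin.lt_def]; omega
  have hb' : LinearIndependent ℂ b' := hb.comp _ (Equiv.swap j i).injective
  have hcne : c ≠ 0 := gso_ne_zero hb' j
  have hcnorm : (‖c‖ : ℂ) ≠ 0 := by
    simpa using norm_ne_zero_iff.2 hcne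
  apply gso_unique
  · have hbm : b' i = b j := by simp [hb'def, Function.comp, Equiv.swap_apply_right]
    rw [hbm]
    have h1 : b j - gso b j ∈ span ℂ (b' '' Set.Iio i) := by
      rw [swap_image_Iio_i hij]
      exact span_mono (Set.subset_insert _ _) (gso_sub_mem b j)
    have h2 : c ∈ span ℂ (b' '' Set.Iio i) := by
      have hsub : b' '' Set.Iic j ⊆ b' '' Set.Iio i := by
        apply Set.image_mono
        intro x hx
        have : x ≤ j := hx
        rw [Set.mem_Iio, Fin.lt_def]
        rw [Fin.le_def] at this
        omega
      exact span_mono hsub (gso_mem_span b' le_rfl)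
    have heq : b j - (gso b j - t • c) = (b j - gso b j) + t • c := by abel
    rw [heq]
    exact Submodule.add_mem _ h1 (Submodule.smul_mem _ _ h2)
  · rw [← gso_span]
    apply mem_orthogonal_span
    rintro x ⟨k, hk, rfl⟩
    have hk' : (k : Fin n) < i := hk
    rcases eq_or_ne k j with heq | hkj
    · rw [heq, ← hcdef]
      show (inner ℂ c (gso b j - t • c) : ℂ) = 0
      rw [inner_sub_right, inner_smul_right, inner_self_eq_norm_sq_to_K, htdef]
      have : ((‖c‖ ^ 2 : ℝ) : ℂ) = (‖c‖ : ℂ) ^ 2 := by push_cast; ring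
      rw [this]
      field_simp
      exact (mul_eq_zero_of_right _ ((sub_eq_zero (G := ℂ)).mpr rfl)).trans (mul_zero _).symm
    · have hkj' : (k : Fin n) < j := by
        rw [Fin.lt_def] at hk' ⊢
        rcases lt_or_ge (k : Fin n).val j.val with h | h
        · exact h
        · exfalso; apply hkj; apply Fin.ext; omega
      have hgk : gso b' k = gso b k := gso_swap_other hij b (Or.inl hkj')
      rw [hgk, inner_sub_right, inner_smul_right]
      have h1 : (inner ℂ (gso b k) (gso b j) : ℂ) = 0 := gso_orthogonal b (ne_of_lt hkj')
      have h2 : (inner ℂ (gso b k) c : ℂ) = 0 := by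
        rw [hcdef, gso_swap_j hij b, inner_add_right, inner_smul_right,
          gso_orthogonal b (ne_of_lt (lt_trans hkj' hji)), gso_orthogonal b (ne_of_lt hkj')]
        ring
      rw [h1, h2]
      ring

end gsoswap


theorem stmt8 (n : ℕ) (δ : ℝ) (hδ1 : 1/2 < δ) (hδ2 : δ ≤ 1)
    (b : Fin n → EuclideanSpace ℂ (Fin n)) (hb : LinearIndependent ℂ b)
    (j i : Fin n) (hij : j.val + 1 = i.val)
    (hfail : ‖gso b i + mu b i j • gso b j‖^2 < δ * ‖gso b j‖^2) :
    pot (b ∘ Equiv.swap j i) < δ * pot b := by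
  have hb' : LinearIndependent ℂ (b ∘ Equiv.swap j i) :=
    hb.comp _ (Equiv.swap j i).injective
  set b' := b ∘ Equiv.swap j i with hb'def
  set c := gso b i + mu b i j • gso b j with hcdef
  have hne_ij : i ≠ j := by intro h; rw [h] at hij; omega
  have hgj : gso b' j = c := by rw [hb'def, gso_swap_j hij b]; rfl
  set t : ℂ := (inner ℂ c (gso b j) : ℂ) / ((‖c‖ ^ 2 : ℝ) : ℂ) with htdef
  have hgi : gso b' i = gso b j - t • c := by
    have h := gso_swap_i hij b hb
    rw [← hb'def, hgj] at h
    exact h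
  -- real quantities
  have hcne : c ≠ 0 := hgj ▸ gso_ne_zero hb' j
  have hane : gso b j ≠ 0 := gso_ne_zero hb j
  have hbne : gso b i ≠ 0 := gso_ne_zero hb i
  have hdne : gso b' i ≠ 0 := gso_ne_zero hb' i
  have hapos : (0:ℝ) < ‖gso b j‖ := norm_pos_iff.2 hane
  have hbpos : (0:ℝ) < ‖gso b i‖ := norm_pos_iff.2 hbne
  have hcpos : (0:ℝ) < ‖c‖ := norm_pos_iff.2 hcne
  -- h1 : ‖c‖² = ‖gso b i‖² + ‖μ‖²‖gso b j‖²
  have h1 : ‖c‖^2 = ‖gso b i‖^2 + ‖mu b i j‖^2 * ‖gso b j‖^2 := by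
    have horth : (inner ℂ (gso b i) ((mu b i j) • gso b j) : ℂ) = 0 := by
      rw [inner_smul_right, gso_orthogonal b hne_ij]; ring
    have h := norm_add_sq_eq_norm_sq_add_norm_sq_of_inner_eq_zero _ _ horth
    rw [norm_smul] at h
    rw [hcdef]; linear_combination h
  -- inner c (gso b j)
  have hinner : (inner ℂ c (gso b j) : ℂ)
      = (starRingEnd ℂ) (mu b i j) * ((‖gso b j‖ : ℂ)) ^ 2 := by
    rw [hcdef, inner_add_left, inner_smul_left, gso_orthogonal b hne_ij,
      inner_self_eq_norm_sq_to_K]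
    norm_cast
    rw [zero_add]
    rfl
  -- h2 : ‖gso b j‖² = ‖gso b' i‖² + ‖t‖²‖c‖²
  have h2 : ‖gso b j‖^2 = ‖gso b' i‖^2 + ‖t‖^2 * ‖c‖^2 := by
    have hsum : gso b j = gso b' i + t • c := by rw [hgi]; abel
    have horth : (inner ℂ (gso b' i) (t • c) : ℂ) = 0 := by
      rw [inner_smul_right, ← hgj, gso_orthogonal b' hne_ij]; ring
    have h := norm_add_sq_eq_norm_sq_add_norm_sq_of_inner_eq_zero _ _ horth
    rw [← hsum, norm_smul] at h
    linear_combination h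
  -- h3 : ‖t‖‖c‖² = ‖μ‖‖gso b j‖²
  have h3 : ‖t‖ * ‖c‖^2 = ‖mu b i j‖ * ‖gso b j‖^2 := by
    have hnt : ‖t‖ = ‖mu b i j‖ * ‖gso b j‖^2 / ‖c‖^2 := by
      rw [htdef, norm_div, hinner, norm_mul, RCLike.norm_conj, norm_pow]
      have e1 : ‖((‖gso b j‖ : ℝ) : ℂ)‖ = ‖gso b j‖ := by
        simp
      have e2 : ‖((‖c‖ ^ 2 : ℝ) : ℂ)‖ = ‖c‖^2 := by
        simp
      rw [e1, e2]
    rw [hnt]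
    field_simp
  -- key : ‖c‖²‖gso b' i‖² = ‖gso b j‖²‖gso b i‖²
  have key : ‖c‖^2 * ‖gso b' i‖^2 = ‖gso b j‖^2 * ‖gso b i‖^2 := by
    linear_combination (-(‖c‖^2))*h2 + (‖gso b j‖^2)*h1
      - (‖t‖*‖c‖^2 + ‖mu b i j‖*‖gso b j‖^2)*h3
  -- exponents
  have hn : i.val < n := i.isLt
  have he : 2 * (n - 1 - j.val) = 2 * ((n - 1 - i.val) + 1) := by omega
  have hij_ne : j ≠ i := fun h => hne_ij h.symm
  -- product decomposition
  have hpot : ∀ f : Fin n → EuclideanSpace ℂ (Fin n),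
      pot f = ‖gso f j‖ ^ (2 * (n - 1 - j.val)) * (‖gso f i‖ ^ (2 * (n - 1 - i.val)) *
        ∏ m ∈ (Finset.univ.erase j).erase i, ‖gso f m‖ ^ (2 * (n - 1 - m.val))) := by
    intro f
    rw [pot, ← Finset.mul_prod_erase _ _ (Finset.mem_univ j),
      ← Finset.mul_prod_erase _ _ (Finset.mem_erase.mpr ⟨hne_ij, Finset.mem_univ i⟩)]
  set Q : ℝ := ∏ m ∈ (Finset.univ.erase j).erase i, ‖gso b m‖ ^ (2 * (n - 1 - m.val)) with hQdef
  have hQeq : ∏ m ∈ (Finset.univ.erase j).erase i, ‖gso b' m‖ ^ (2 * (n - 1 - m.val)) = Q := by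
    apply Finset.prod_congr rfl
    intro m hm
    rw [Finset.mem_erase, Finset.mem_erase] at hm
    have hmi : m.val ≠ i.val := fun h => hm.1 (Fin.ext h)
    have hmj : m.val ≠ j.val := fun h => hm.2.1 (Fin.ext h)
    rw [hb'def, gso_swap_other hij b (by rw [Fin.lt_def, Fin.lt_def]; omega)]
  have hQpos : 0 < Q :=
    Finset.prod_pos fun m _ => pow_pos (norm_pos_iff.2 (gso_ne_zero hb m)) _
  have hR : 0 < (‖gso b j‖^2 * ‖gso b i‖^2) ^ (n - 1 - i.val) * Q :=
    mul_pos (pow_pos (by positivity) _) hQpos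
  calc pot b' = (‖c‖^2 * ‖gso b' i‖^2) ^ (n - 1 - i.val) * (‖c‖^2 * Q) := by
        rw [hpot b', hgj, hQeq, he]
        ring
    _ = ‖c‖^2 * ((‖gso b j‖^2 * ‖gso b i‖^2) ^ (n - 1 - i.val) * Q) := by
        rw [key]; ring
    _ < (δ * ‖gso b j‖^2) * ((‖gso b j‖^2 * ‖gso b i‖^2) ^ (n - 1 - i.val) * Q) :=
        mul_lt_mul_of_pos_right hfail hR
    _ = δ * pot b := by
        rw [hpot b, he]
        ring
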